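/- Let E be a real inner product space and let γ : ℝ → E be a differentiable function that is periodic with period 1 (γ(s + 1) = γ(s) for all s) and is not constant. Then there exist s, t ∈ ℝ such that γ(s) ≠ γ(t), ⟪γ(s) − γ(t), deriv γ s⟫ = 0, and ⟪γ(s) − γ(t), deriv γ t⟫ = 0. -/

import Mathlib

/-- Every nonconstant differentiable closed curve (period `1`) in a real inner
product space possesses a binormal chord: points `s, t` with `γ(s) ≠ γ(t)`
such that the chord `γ(s) − γ(t)` is orthogonal to the curve at both
endpoints. -/
theorem exists_binormal_chord {E : Type*} [NormedAddCommGroup E]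
    [InnerProductSpace ℝ E] (γ : ℝ → E) (hγ : Differentiable ℝ γ)
    (hper : ∀ s : ℝ, γ (s + 1) = γ s) (hnc : ¬ ∃ c : E, ∀ s : ℝ, γ s = c) :
    ∃ s t : ℝ, γ s ≠ γ t ∧
      inner ℝ (γ s - γ t) (deriv γ s) = (0 : ℝ) ∧
      inner ℝ (γ s - γ t) (deriv γ t) = (0 : ℝ) := by
  obtain ⟨a, b, hab⟩ : ∃ a b, γ a ≠ γ b := by
    by_contra h
    push_neg at h
    exact hnc ⟨γ 0, fun s => h s 0⟩
  have hp : Function.Periodic γ 1 := hper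
  have hfr : ∀ u : ℝ, γ (Int.fract u) = γ u := by
    intro u
    have h := hp.sub_int_mul_eq (x := u) ⌊u⌋
    rw [mul_one] at h
    have h2 : Int.fract u = u - ⌊u⌋ := rfl
    rw [h2]
    exact h
  set g : ℝ × ℝ → ℝ := fun p => inner ℝ (γ p.1 - γ p.2) (γ p.1 - γ p.2) with hg
  have hgc : Continuous g := by
    apply Continuous.inner <;> exact (hγ.continuous.comp continuous_fst).sub
      (hγ.continuous.comp continuous_snd)
  obtain ⟨⟨s, t⟩, _, hmax⟩ := ((isCompact_Icc (a := (0:ℝ)) (b := 1)).prod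
      isCompact_Icc).exists_isMaxOn
    ((Set.nonempty_Icc.2 zero_le_one).prod (Set.nonempty_Icc.2 zero_le_one))
    hgc.continuousOn
  have hglob : ∀ p : ℝ × ℝ, g p ≤ g (s, t) := by
    rintro ⟨u, v⟩
    have h1 : g (u, v) = g (Int.fract u, Int.fract v) := by
      simp only [hg, hfr]
    rw [h1]
    exact hmax (Set.mk_mem_prod ⟨Int.fract_nonneg u, (Int.fract_lt_one u).le⟩
      ⟨Int.fract_nonneg v, (Int.fract_lt_one v).le⟩)
  have hpos : 0 < g (s, t) := by
    refine lt_of_lt_of_le ?_ (hglob (a, b))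
    have h0 : (0:ℝ) < ‖γ a - γ b‖ ^ 2 :=
      pow_pos (norm_pos_iff.2 (sub_ne_zero.2 hab)) 2
    simpa [hg, real_inner_self_eq_norm_sq] using h0
  have hne : γ s ≠ γ t := by
    intro h
    rw [show g (s, t) = 0 by simp [hg, h]] at hpos
    exact lt_irrefl _ hpos
  refine ⟨s, t, hne, ?_, ?_⟩
  · -- derivative in first variable
    have hd : HasDerivAt (fun u => g (u, t))
        (inner ℝ (γ s - γ t) (deriv γ s) + inner ℝ (deriv γ s) (γ s - γ t) : ℝ) s := by
      have h1 : HasDerivAt (fun u => γ u - γ t) (deriv γ s) s :=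
        ((hγ s).hasDerivAt).sub_const (γ t)
      exact h1.inner ℝ h1
    have hloc : IsLocalMax (fun u => g (u, t)) s :=
      Filter.Eventually.of_forall fun u => hglob (u, t)
    have h0 := hloc.hasDerivAt_eq_zero hd
    have hc := real_inner_comm (deriv γ s) (γ s - γ t)
    linarith
  · have hd : HasDerivAt (fun v => g (s, v))
        (inner ℝ (γ s - γ t) (-deriv γ t) + inner ℝ (-deriv γ t) (γ s - γ t) : ℝ) t := by
      have h1 : HasDerivAt (fun v => γ s - γ v) (-deriv γ t) t :=
        ((hγ t).hasDerivAt).const_sub (γ s)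
      exact h1.inner ℝ h1
    have hloc : IsLocalMax (fun v => g (s, v)) t :=
      Filter.Eventually.of_forall fun v => hglob (s, v)
    have h0 := hloc.hasDerivAt_eq_zero hd
    rw [inner_neg_right, inner_neg_left] at h0
    have hc := real_inner_comm (deriv γ t) (γ s - γ t)
    linarith
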